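/- Let n = p + q with p ≥ m, and let G ∈ ℝ^{n×m} have full column rank, written in block form G = [G1; G2] with G1 ∈ ℝ^{p×m} and G2 ∈ ℝ^{q×m}. Let A ∈ ℝ^{p×p} and B ∈ ℝ^{q×q} be symmetric positive semidefinite with λ_min(A) ≥ λ_max(B), and let C ∈ ℝ^{n×n} be the block-diagonal matrix with diagonal blocks A and B. If ‖C − G Gᵀ‖_F < λ_min(GᵀG)/√2, then λ_min(G1ᵀ G1) ≥ λ_max(G2ᵀ G2). -/

import Mathlib

open Matrix

/-- Frobenius inner product of two real matrices. -/
noncomputable def finner {m n : Type*} [Fintype m] [Fintype n]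
    (A B : Matrix m n ℝ) : ℝ := (Aᵀ * B).trace

/-- Frobenius norm of a real matrix. -/
noncomputable def fnorm {m n : Type*} [Fintype m] [Fintype n]
    (A : Matrix m n ℝ) : ℝ := Real.sqrt (finner A A)

open scoped Classical in
/-- Square root of a positive semidefinite real matrix (junk value `0` otherwise). -/
noncomputable def psqrt {r : ℕ} (M : Matrix (Fin r) (Fin r) ℝ) : Matrix (Fin r) (Fin r) ℝ :=
  if h : M.PosSemidef then
    (h.1.eigenvectorUnitary : Matrix (Fin r) (Fin r) ℝ) * diagonal ((↑) ∘ Real.sqrt ∘ h.1.eigenvalues) *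
      (star (h.1.eigenvectorUnitary : Matrix (Fin r) (Fin r) ℝ))
  else 0

open scoped Classical in
/-- Smallest eigenvalue of a symmetric real matrix (junk value `0` otherwise). -/
noncomputable def lammin {r : ℕ} (M : Matrix (Fin r) (Fin r) ℝ) : ℝ :=
  if h : M.IsHermitian then ⨅ i, h.eigenvalues i else 0

open scoped Classical in
/-- Largest eigenvalue of a symmetric real matrix (junk value `0` otherwise). -/
noncomputable def lammax {r : ℕ} (M : Matrix (Fin r) (Fin r) ℝ) : ℝ :=
  if h : M.IsHermitian then ⨆ i, h.eigenvalues i else 0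

/-! ### Auxiliary lemmas on the Frobenius inner product -/

lemma finner_self_eq_sum {α β : Type*} [Fintype α] [Fintype β] (M : Matrix α β ℝ) :
    finner M M = ∑ j, ∑ i, (M i j)^2 := by
  simp [finner, Matrix.trace, Matrix.mul_apply, Matrix.diag, sq]

lemma finner_self_nonneg {α β : Type*} [Fintype α] [Fintype β] (M : Matrix α β ℝ) :
    0 ≤ finner M M := by
  rw [finner_self_eq_sum]
  positivity

lemma finner_transpose {α β : Type*} [Fintype α] [Fintype β] (M : Matrix α β ℝ) :
    finner Mᵀ Mᵀ = finner M M := by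
  rw [finner_self_eq_sum, finner_self_eq_sum]
  exact Finset.sum_comm

lemma finner_neg {α β : Type*} [Fintype α] [Fintype β] (M : Matrix α β ℝ) :
    finner (-M) (-M) = finner M M := by
  rw [finner_self_eq_sum, finner_self_eq_sum]
  simp

lemma mulVec_dot_le {α β : Type*} [Fintype α] [Fintype β] (M : Matrix α β ℝ) (x : β → ℝ) :
    (M *ᵥ x) ⬝ᵥ (M *ᵥ x) ≤ finner M M * (x ⬝ᵥ x) := by
  rw [finner_self_eq_sum, Finset.sum_comm, dotProduct, Finset.sum_mul]
  apply Finset.sum_le_sum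
  intro i _
  have := Finset.sum_mul_sq_le_sq_mul_sq Finset.univ (fun j => M i j) x
  simpa [Matrix.mulVec, dotProduct, sq] using this

lemma dot_self_nonneg {ι : Type*} [Fintype ι] (x : ι → ℝ) : 0 ≤ x ⬝ᵥ x :=
  Finset.sum_nonneg fun i _ => mul_self_nonneg _

lemma dot_sq_le_finner {α : Type*} [Fintype α] (M : Matrix α α ℝ) (x : α → ℝ)
    (hx : x ⬝ᵥ x = 1) : (x ⬝ᵥ (M *ᵥ x))^2 ≤ finner M M := by
  have h1 : (x ⬝ᵥ (M *ᵥ x))^2 ≤ (x ⬝ᵥ x) * ((M *ᵥ x) ⬝ᵥ (M *ᵥ x)) := by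
    have := Finset.sum_mul_sq_le_sq_mul_sq Finset.univ x (M *ᵥ x)
    simpa [dotProduct, sq] using this
  have h2 := mulVec_dot_le M x
  rw [hx] at h1 h2
  simpa using h1.trans (by simpa using h2)

lemma finner_fromBlocks {α β γ δ : Type*} [Fintype α] [Fintype β] [Fintype γ] [Fintype δ]
    (P : Matrix α γ ℝ) (Q : Matrix α δ ℝ) (R : Matrix β γ ℝ) (S : Matrix β δ ℝ) :
    finner (Matrix.fromBlocks P Q R S) (Matrix.fromBlocks P Q R S)
      = finner P P + finner Q Q + finner R R + finner S S := by
  simp only [finner_self_eq_sum, Fintype.sum_sum_type, Matrix.fromBlocks_apply₁₁,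
    Matrix.fromBlocks_apply₁₂, Matrix.fromBlocks_apply₂₁, Matrix.fromBlocks_apply₂₂,
    Finset.sum_add_distrib]
  ring

/-! ### Eigenvalue lemmas -/

lemma lammin_eq {r : ℕ} {M : Matrix (Fin r) (Fin r) ℝ} (h : M.IsHermitian) :
    lammin M = ⨅ i, h.eigenvalues i := by rw [lammin, dif_pos h]

lemma lammax_eq {r : ℕ} {M : Matrix (Fin r) (Fin r) ℝ} (h : M.IsHermitian) :
    lammax M = ⨆ i, h.eigenvalues i := by rw [lammax, dif_pos h]

lemma lammin_le_eig {r : ℕ} {M : Matrix (Fin r) (Fin r) ℝ} (h : M.IsHermitian) (i : Fin r) :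
    lammin M ≤ h.eigenvalues i := by
  rw [lammin_eq h]
  exact ciInf_le (Finite.bddBelow_range _) i

lemma eig_le_lammax {r : ℕ} {M : Matrix (Fin r) (Fin r) ℝ} (h : M.IsHermitian) (i : Fin r) :
    h.eigenvalues i ≤ lammax M := by
  rw [lammax_eq h]
  exact le_ciSup (Finite.bddAbove_range _) i

lemma dot_mulVec_eq_sum {r : ℕ} {M : Matrix (Fin r) (Fin r) ℝ} (h : M.IsHermitian)
    (v : Fin r → ℝ) :
    v ⬝ᵥ (M *ᵥ v)
      = ∑ i, h.eigenvalues i * (((h.eigenvectorUnitary : Matrix (Fin r) (Fin r) ℝ)ᵀ *ᵥ v) i)^2 := by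
  classical
  set U : Matrix (Fin r) (Fin r) ℝ := (h.eigenvectorUnitary : Matrix (Fin r) (Fin r) ℝ) with hU
  have hstar : star U = Uᵀ := Matrix.conjTranspose_eq_transpose_of_trivial U
  set w : Fin r → ℝ := Uᵀ *ᵥ v with hw
  have hM : M = U * Matrix.diagonal h.eigenvalues * Uᵀ := by
    have := h.spectral_theorem
    rw [Unitary.conjStarAlgAut_apply, ← hU, hstar] at this
    simpa using this
  have hMv : M *ᵥ v = U *ᵥ (Matrix.diagonal h.eigenvalues *ᵥ w) := by
    conv_lhs => rw [hM]
    rw [hw]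
    simp [Matrix.mulVec_mulVec, Matrix.mul_assoc]
  calc v ⬝ᵥ (M *ᵥ v) = v ⬝ᵥ (U *ᵥ (Matrix.diagonal h.eigenvalues *ᵥ w)) := by
        rw [hMv]
    _ = w ⬝ᵥ (Matrix.diagonal h.eigenvalues *ᵥ w) := by
        rw [Matrix.dotProduct_mulVec v U, ← Matrix.mulVec_transpose]
    _ = ∑ i, h.eigenvalues i * (w i)^2 := by
        simp [dotProduct, Matrix.mulVec_diagonal, sq]
        ring_nf
        exact Finset.sum_congr rfl fun i _ => by ring

lemma dot_self_eq_sum {r : ℕ} {M : Matrix (Fin r) (Fin r) ℝ} (h : M.IsHermitian)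
    (v : Fin r → ℝ) :
    v ⬝ᵥ v
      = ∑ i, (((h.eigenvectorUnitary : Matrix (Fin r) (Fin r) ℝ)ᵀ *ᵥ v) i)^2 := by
  classical
  set U : Matrix (Fin r) (Fin r) ℝ := (h.eigenvectorUnitary : Matrix (Fin r) (Fin r) ℝ) with hU
  have hstar : star U = Uᵀ := Matrix.conjTranspose_eq_transpose_of_trivial U
  have hUU : U * Uᵀ = 1 := by
    have := (Matrix.mem_unitaryGroup_iff).mp h.eigenvectorUnitary.2
    rwa [hstar] at this
  calc v ⬝ᵥ v = v ⬝ᵥ ((U * Uᵀ) *ᵥ v) := by rw [hUU, Matrix.one_mulVec]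
    _ = v ⬝ᵥ (U *ᵥ (Uᵀ *ᵥ v)) := by rw [← Matrix.mulVec_mulVec]
    _ = (Uᵀ *ᵥ v) ⬝ᵥ (Uᵀ *ᵥ v) := by
        rw [Matrix.dotProduct_mulVec v U, ← Matrix.mulVec_transpose]
    _ = ∑ i, ((Uᵀ *ᵥ v) i)^2 := by simp [dotProduct, sq]

lemma rayleigh_le_lammax {r : ℕ} {M : Matrix (Fin r) (Fin r) ℝ} (h : M.IsHermitian)
    (v : Fin r → ℝ) :
    v ⬝ᵥ (M *ᵥ v) ≤ lammax M * (v ⬝ᵥ v) := by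
  rw [dot_mulVec_eq_sum h v, dot_self_eq_sum h v, Finset.mul_sum]
  apply Finset.sum_le_sum
  intro i _
  have h1 := eig_le_lammax h i
  nlinarith [sq_nonneg (((h.eigenvectorUnitary : Matrix (Fin r) (Fin r) ℝ)ᵀ *ᵥ v) i)]

lemma lammin_le_rayleigh {r : ℕ} {M : Matrix (Fin r) (Fin r) ℝ} (h : M.IsHermitian)
    (v : Fin r → ℝ) :
    lammin M * (v ⬝ᵥ v) ≤ v ⬝ᵥ (M *ᵥ v) := by
  rw [dot_mulVec_eq_sum h v, dot_self_eq_sum h v, Finset.mul_sum]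
  apply Finset.sum_le_sum
  intro i _
  have h1 := lammin_le_eig h i
  nlinarith [sq_nonneg (((h.eigenvectorUnitary : Matrix (Fin r) (Fin r) ℝ)ᵀ *ᵥ v) i)]

lemma inner_eq_dot {r : ℕ} (x y : EuclideanSpace ℝ (Fin r)) :
    (inner ℝ x y : ℝ) = (x : Fin r → ℝ) ⬝ᵥ (y : Fin r → ℝ) := by
  simp [PiLp.inner_apply, dotProduct, mul_comm]

lemma eigvec_unit {r : ℕ} {M : Matrix (Fin r) (Fin r) ℝ} (h : M.IsHermitian) (i : Fin r) :
    ⇑(h.eigenvectorBasis i) ⬝ᵥ ⇑(h.eigenvectorBasis i) = 1 := by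
  have h1 := h.eigenvectorBasis.orthonormal.1 i
  have h2 : (inner ℝ (h.eigenvectorBasis i) (h.eigenvectorBasis i) : ℝ) = 1 := by
    rw [real_inner_self_eq_norm_sq, h1]; norm_num
  rwa [inner_eq_dot] at h2

lemma exists_unit_eigvec_min {r : ℕ} (hr : 0 < r) {M : Matrix (Fin r) (Fin r) ℝ}
    (h : M.IsHermitian) :
    ∃ u : Fin r → ℝ, u ⬝ᵥ u = 1 ∧ M *ᵥ u = lammin M • u := by
  haveI : Nonempty (Fin r) := ⟨⟨0, hr⟩⟩
  obtain ⟨i0, hi0⟩ := Finite.exists_min h.eigenvalues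
  have hmin : lammin M = h.eigenvalues i0 := by
    rw [lammin_eq h]
    exact le_antisymm (ciInf_le (Finite.bddBelow_range _) i0) (le_ciInf hi0)
  exact ⟨⇑(h.eigenvectorBasis i0), eigvec_unit h i0, by
    rw [hmin]; exact h.mulVec_eigenvectorBasis i0⟩

lemma exists_unit_eigvec_max {r : ℕ} (hr : 0 < r) {M : Matrix (Fin r) (Fin r) ℝ}
    (h : M.IsHermitian) :
    ∃ u : Fin r → ℝ, u ⬝ᵥ u = 1 ∧ M *ᵥ u = lammax M • u := by
  haveI : Nonempty (Fin r) := ⟨⟨0, hr⟩⟩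
  obtain ⟨i0, hi0⟩ := Finite.exists_max h.eigenvalues
  have hmax : lammax M = h.eigenvalues i0 := by
    rw [lammax_eq h]
    exact le_antisymm (ciSup_le hi0) (le_ciSup (Finite.bddAbove_range _) i0)
  exact ⟨⇑(h.eigenvectorBasis i0), eigvec_unit h i0, by
    rw [hmax]; exact h.mulVec_eigenvectorBasis i0⟩

lemma lammin_nonneg {r : ℕ} {M : Matrix (Fin r) (Fin r) ℝ} (h : M.PosSemidef) :
    0 ≤ lammin M := by
  rw [lammin_eq h.1]
  exact Real.iInf_nonneg fun i => h.eigenvalues_nonneg i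

lemma unit_scale {ι : Type*} [Fintype ι] {z : ι → ℝ} {s : ℝ} (hz : z ⬝ᵥ z = s) (hs : 0 < s) :
    ((Real.sqrt s)⁻¹ • z) ⬝ᵥ ((Real.sqrt s)⁻¹ • z) = 1 := by
  rw [smul_dotProduct, dotProduct_smul, hz, smul_eq_mul, smul_eq_mul]
  rw [← mul_assoc, ← mul_inv]
  rw [Real.mul_self_sqrt hs.le]
  field_simp

lemma exists_unit_ker {p m : ℕ} (hpm : m ≤ p) (G1 : Matrix (Fin p) (Fin m) ℝ)
    (u : Fin m → ℝ) (hu : u ≠ 0) (hGu : G1 *ᵥ u = 0) :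
    ∃ x : Fin p → ℝ, x ⬝ᵥ x = 1 ∧ G1ᵀ *ᵥ x = 0 := by
  have hker1 : u ∈ LinearMap.ker G1.mulVecLin := by
    simpa [Matrix.mulVecLin_apply] using hGu
  have hrank1 : G1.rank < m := by
    by_contra hcon
    push_neg at hcon
    have hle := G1.rank_le_card_width
    simp only [Fintype.card_fin] at hle
    have heq : G1.rank = m := le_antisymm hle hcon
    have hrn := LinearMap.finrank_range_add_finrank_ker G1.mulVecLin
    rw [Module.finrank_pi] at hrn
    simp only [Fintype.card_fin] at hrn
    have : Module.finrank ℝ (LinearMap.ker G1.mulVecLin) = 0 := by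
      have : G1.rank = Module.finrank ℝ (LinearMap.range G1.mulVecLin) := rfl
      omega
    have hbot : LinearMap.ker G1.mulVecLin = ⊥ := by
      rw [Submodule.finrank_eq_zero] at this
      exact this
    rw [hbot, Submodule.mem_bot] at hker1
    exact hu hker1
  have hrank2 : G1ᵀ.rank < p := by
    rw [Matrix.rank_transpose]
    omega
  have hkerT : ∃ x : Fin p → ℝ, x ≠ 0 ∧ G1ᵀ *ᵥ x = 0 := by
    have hrn := LinearMap.finrank_range_add_finrank_ker G1ᵀ.mulVecLin
    rw [Module.finrank_pi] at hrn
    simp only [Fintype.card_fin] at hrn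
    have hkpos : 0 < Module.finrank ℝ (LinearMap.ker G1ᵀ.mulVecLin) := by
      have : G1ᵀ.rank = Module.finrank ℝ (LinearMap.range G1ᵀ.mulVecLin) := rfl
      omega
    rw [Module.finrank_pos_iff] at hkpos
    obtain ⟨⟨x, hxker⟩, hxne⟩ := exists_ne (0 : LinearMap.ker G1ᵀ.mulVecLin)
    refine ⟨x, ?_, by
      have := hxker
      simp only [LinearMap.mem_ker, Matrix.mulVecLin_apply] at this
      exact this⟩
    intro hx0
    apply hxne
    ext
    simp [hx0]
  obtain ⟨x, hx0, hxker⟩ := hkerT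
  have hnn : 0 ≤ x ⬝ᵥ x := dot_self_nonneg x
  have hpos : 0 < x ⬝ᵥ x := by
    rcases lt_or_eq_of_le hnn with h | h
    · exact h
    · exact absurd (dotProduct_self_eq_zero.mp h.symm) hx0
  refine ⟨(Real.sqrt (x ⬝ᵥ x))⁻¹ • x, unit_scale rfl hpos, ?_⟩
  rw [Matrix.mulVec_smul, hxker, smul_zero]

lemma psd_transpose_mul_self {a b : ℕ} (M : Matrix (Fin a) (Fin b) ℝ) :
    (Mᵀ * M).PosSemidef := by
  have := Matrix.posSemidef_conjTranspose_mul_self M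
  rwa [Matrix.conjTranspose_eq_transpose_of_trivial] at this

lemma dot_mul_self_eq {a b : ℕ} (M : Matrix (Fin a) (Fin b) ℝ) (w : Fin b → ℝ) :
    (M *ᵥ w) ⬝ᵥ (M *ᵥ w) = w ⬝ᵥ ((Mᵀ * M) *ᵥ w) := by
  rw [← Matrix.mulVec_mulVec, Matrix.dotProduct_mulVec w Mᵀ, Matrix.vecMul_transpose]

lemma fromBlocks_sub' {α β γ δ : Type*}
    (P : Matrix α γ ℝ) (Q : Matrix α δ ℝ) (R : Matrix β γ ℝ) (S : Matrix β δ ℝ)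
    (P' : Matrix α γ ℝ) (Q' : Matrix α δ ℝ) (R' : Matrix β γ ℝ) (S' : Matrix β δ ℝ) :
    Matrix.fromBlocks P Q R S - Matrix.fromBlocks P' Q' R' S'
      = Matrix.fromBlocks (P - P') (Q - Q') (R - R') (S - S') := by
  simp [sub_eq_add_neg, Matrix.fromBlocks_neg, Matrix.fromBlocks_add]

set_option maxHeartbeats 1000000 in
/-- matrix form of the paper's appendix Lemma 15.
Eigenvalue separation between the two blocks of the Gram matrix of a nearly
block-diagonally factorized matrix. -/
theorem stmt_8 {p q m : ℕ} (hpm : m ≤ p)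
    (G1 : Matrix (Fin p) (Fin m) ℝ) (G2 : Matrix (Fin q) (Fin m) ℝ)
    (G : Matrix (Fin p ⊕ Fin q) (Fin m) ℝ) (hG : G = Matrix.fromRows G1 G2)
    (hfull : (Gᵀ * G).PosDef)
    (A : Matrix (Fin p) (Fin p) ℝ) (B : Matrix (Fin q) (Fin q) ℝ)
    (hA : A.PosSemidef) (hB : B.PosSemidef)
    (hAB : lammax B ≤ lammin A)
    (C : Matrix (Fin p ⊕ Fin q) (Fin p ⊕ Fin q) ℝ)
    (hC : C = Matrix.fromBlocks A 0 0 B)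
    (hclose : fnorm (C - G * Gᵀ) < lammin (Gᵀ * G) / Real.sqrt 2) :
    lammax (G2ᵀ * G2) ≤ lammin (G1ᵀ * G1) := by
  by_contra hcon
  push_neg at hcon
  set μ1 := lammin (G1ᵀ * G1) with hμ1
  set μ2 := lammax (G2ᵀ * G2) with hμ2
  set lam := lammin (Gᵀ * G) with hlam
  have hpsd1 : (G1ᵀ * G1).PosSemidef := psd_transpose_mul_self G1
  have hpsd2 : (G2ᵀ * G2).PosSemidef := psd_transpose_mul_self G2
  have hpsdG : (Gᵀ * G).PosSemidef := hfull.posSemidef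
  have hμ1nn : 0 ≤ μ1 := lammin_nonneg hpsd1
  have hμ2pos : 0 < μ2 := lt_of_le_of_lt hμ1nn hcon
  have hlamnn : 0 ≤ lam := lammin_nonneg hpsdG
  have hm : 0 < m := by
    rcases Nat.eq_zero_or_pos m with h0 | h
    · exfalso
      haveI : IsEmpty (Fin m) := ⟨fun i => Nat.not_lt_zero i.1 (h0 ▸ i.2)⟩
      have : μ2 = 0 := by
        rw [hμ2, lammax_eq hpsd2.1]
        exact Real.iSup_of_isEmpty _
      linarith
    · exact h
  have hsq2 : Real.sqrt μ2 * Real.sqrt μ2 = μ2 := Real.mul_self_sqrt hμ2pos.le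
  have hsqrt2pos : 0 < Real.sqrt μ2 := Real.sqrt_pos.mpr hμ2pos
  -- eigenvectors
  obtain ⟨u, huu, huE⟩ := exists_unit_eigvec_min hm hpsd1.1
  obtain ⟨v, hvv, hvE⟩ := exists_unit_eigvec_max hm hpsd2.1
  rw [← hμ1] at huE
  rw [← hμ2] at hvE
  -- the unit vector y in the G2-direction
  have hG2v : (G2 *ᵥ v) ⬝ᵥ (G2 *ᵥ v) = μ2 := by
    rw [dot_mul_self_eq, hvE, dotProduct_smul, smul_eq_mul, hvv, mul_one]
  set y : Fin q → ℝ := (Real.sqrt μ2)⁻¹ • (G2 *ᵥ v) with hy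
  have hyy : y ⬝ᵥ y = 1 := unit_scale hG2v hμ2pos
  have hG2Ty : G2ᵀ *ᵥ y = Real.sqrt μ2 • v := by
    rw [hy, Matrix.mulVec_smul, Matrix.mulVec_mulVec, hvE, smul_smul]
    congr 1
    rw [inv_mul_eq_div, div_eq_iff hsqrt2pos.ne']
    exact hsq2.symm
  have hyG2 : y ⬝ᵥ ((G2 * G2ᵀ) *ᵥ y) = μ2 := by
    rw [← Matrix.mulVec_mulVec, Matrix.dotProduct_mulVec y G2, ← Matrix.mulVec_transpose,
      hG2Ty, smul_dotProduct, dotProduct_smul, smul_eq_mul, smul_eq_mul, hvv,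
      mul_one]
    exact hsq2
  -- the unit vector x1 in the G1-direction
  have hx1 : ∃ x1 : Fin p → ℝ, x1 ⬝ᵥ x1 = 1 ∧ x1 ⬝ᵥ ((G1 * G1ᵀ) *ᵥ x1) = μ1 := by
    rcases eq_or_lt_of_le hμ1nn with hz | hpos
    · -- μ1 = 0 : take a unit kernel vector of G1ᵀ
      have hG1u : G1 *ᵥ u = 0 := by
        have h0 : (G1 *ᵥ u) ⬝ᵥ (G1 *ᵥ u) = 0 := by
          rw [dot_mul_self_eq, huE, dotProduct_smul, smul_eq_mul, huu, mul_one]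
          exact hz.symm
        exact dotProduct_self_eq_zero.mp h0
      have hune : u ≠ 0 := by
        intro h0
        rw [h0] at huu
        simp [dotProduct] at huu
      obtain ⟨x1, hx1u, hx1k⟩ := exists_unit_ker hpm G1 u hune hG1u
      refine ⟨x1, hx1u, ?_⟩
      rw [← Matrix.mulVec_mulVec, hx1k, Matrix.mulVec_zero, dotProduct_zero]
      exact hz
    · -- μ1 > 0 : normalize G1 *ᵥ u
      have hsq1 : Real.sqrt μ1 * Real.sqrt μ1 = μ1 := Real.mul_self_sqrt hpos.le
      have hsqrt1pos : 0 < Real.sqrt μ1 := Real.sqrt_pos.mpr hpos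
      have hG1u : (G1 *ᵥ u) ⬝ᵥ (G1 *ᵥ u) = μ1 := by
        rw [dot_mul_self_eq, huE, dotProduct_smul, smul_eq_mul, huu, mul_one]
      set x1 : Fin p → ℝ := (Real.sqrt μ1)⁻¹ • (G1 *ᵥ u) with hx1def
      have hx1u : x1 ⬝ᵥ x1 = 1 := unit_scale hG1u hpos
      have hG1Tx1 : G1ᵀ *ᵥ x1 = Real.sqrt μ1 • u := by
        rw [hx1def, Matrix.mulVec_smul, Matrix.mulVec_mulVec, huE, smul_smul]
        congr 1
        rw [inv_mul_eq_div, div_eq_iff hsqrt1pos.ne']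
        exact hsq1.symm
      refine ⟨x1, hx1u, ?_⟩
      rw [← Matrix.mulVec_mulVec, Matrix.dotProduct_mulVec x1 G1, ← Matrix.mulVec_transpose,
        hG1Tx1, smul_dotProduct, dotProduct_smul, smul_eq_mul, smul_eq_mul, huu,
        mul_one]
      exact hsq1
  obtain ⟨x1, hx1u, hx1G⟩ := hx1
  -- scalar quantities
  set α := x1 ⬝ᵥ (A *ᵥ x1) with hα
  set β := y ⬝ᵥ (B *ᵥ y) with hβ
  set t := v ⬝ᵥ ((G1ᵀ * G1) *ᵥ v) with ht
  set s := u ⬝ᵥ ((G2ᵀ * G2) *ᵥ u) with hs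
  have hαge : lammin A ≤ α := by
    have h1 := lammin_le_rayleigh hA.1 x1
    rwa [hx1u, mul_one, ← hα] at h1
  have hβle : β ≤ lammax B := by
    have h1 := rayleigh_le_lammax hB.1 y
    rwa [hyy, mul_one, ← hβ] at h1
  have htge : μ1 ≤ t := by
    have h1 := lammin_le_rayleigh hpsd1.1 v
    rwa [hvv, mul_one, ← hμ1, ← ht] at h1
  have hsle : s ≤ μ2 := by
    have h1 := rayleigh_le_lammax hpsd2.1 u
    rwa [huu, mul_one, ← hμ2, ← hs] at h1
  -- lam ≤ μ1 + μ2
  have hGtG : Gᵀ * G = G1ᵀ * G1 + G2ᵀ * G2 := by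
    rw [hG, Matrix.transpose_fromRows, Matrix.fromCols_mul_fromRows]
  have hlamle : lam ≤ μ1 + μ2 := by
    have h2 : u ⬝ᵥ ((Gᵀ * G) *ᵥ u) = μ1 + s := by
      rw [hGtG, Matrix.add_mulVec, dotProduct_add, huE, dotProduct_smul,
        smul_eq_mul, huu, mul_one, ← hs]
    have h1 := lammin_le_rayleigh hpsdG.1 u
    rw [huu, mul_one, h2, ← hlam] at h1
    linarith
  -- block decomposition of the error
  have hGGt : G * Gᵀ = Matrix.fromBlocks (G1 * G1ᵀ) (G1 * G2ᵀ) (G2 * G1ᵀ) (G2 * G2ᵀ) := by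
    rw [hG, Matrix.transpose_fromRows, Matrix.fromRows_mul_fromCols]
  have hE : C - G * Gᵀ
      = Matrix.fromBlocks (A - G1 * G1ᵀ) (0 - G1 * G2ᵀ) (0 - G2 * G1ᵀ) (B - G2 * G2ᵀ) := by
    rw [hC, hGGt, fromBlocks_sub']
  have hsplit : finner (C - G * Gᵀ) (C - G * Gᵀ)
      = finner (A - G1 * G1ᵀ) (A - G1 * G1ᵀ) + finner (G1 * G2ᵀ) (G1 * G2ᵀ)
        + finner (G2 * G1ᵀ) (G2 * G1ᵀ) + finner (B - G2 * G2ᵀ) (B - G2 * G2ᵀ) := by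
    rw [hE, finner_fromBlocks, zero_sub, zero_sub, finner_neg, finner_neg]
  -- bounds on the blocks
  have hI1 : (α - μ1)^2 ≤ finner (A - G1 * G1ᵀ) (A - G1 * G1ᵀ) := by
    have hdot : x1 ⬝ᵥ ((A - G1 * G1ᵀ) *ᵥ x1) = α - μ1 := by
      rw [Matrix.sub_mulVec, dotProduct_sub, ← hα, hx1G]
    rw [← hdot]
    exact dot_sq_le_finner _ x1 hx1u
  have hI2 : (β - μ2)^2 ≤ finner (B - G2 * G2ᵀ) (B - G2 * G2ᵀ) := by
    have hdot : y ⬝ᵥ ((B - G2 * G2ᵀ) *ᵥ y) = β - μ2 := by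
      rw [Matrix.sub_mulVec, dotProduct_sub, ← hβ, hyG2]
    rw [← hdot]
    exact dot_sq_le_finner _ y hyy
  have hG1v : (G1 *ᵥ v) ⬝ᵥ (G1 *ᵥ v) = t := by
    rw [dot_mul_self_eq, ← ht]
  have hI3 : μ2 * t ≤ finner (G1 * G2ᵀ) (G1 * G2ᵀ) := by
    have hvec : (G1 * G2ᵀ) *ᵥ y = Real.sqrt μ2 • (G1 *ᵥ v) := by
      rw [← Matrix.mulVec_mulVec, hG2Ty, Matrix.mulVec_smul]
    have h1 := mulVec_dot_le (G1 * G2ᵀ) y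
    rw [hyy, mul_one, hvec, smul_dotProduct, dotProduct_smul, smul_eq_mul,
      smul_eq_mul, hG1v, ← mul_assoc, hsq2] at h1
    exact h1
  have hI4 : μ2 * t ≤ finner (G2 * G1ᵀ) (G2 * G1ᵀ) := by
    have heq : finner (G2 * G1ᵀ) (G2 * G1ᵀ) = finner (G1 * G2ᵀ) (G1 * G2ᵀ) := by
      have h1 : (G1 * G2ᵀ)ᵀ = G2 * G1ᵀ := by
        rw [Matrix.transpose_mul, Matrix.transpose_transpose]
      rw [← h1, finner_transpose]
    rw [heq]
    exact hI3
  -- the closeness bound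
  have hfin : finner (C - G * Gᵀ) (C - G * Gᵀ) < lam^2 / 2 := by
    have h0 := finner_self_nonneg (C - G * Gᵀ)
    have h1 : fnorm (C - G * Gᵀ) ^ 2 = finner (C - G * Gᵀ) (C - G * Gᵀ) :=
      Real.sq_sqrt h0
    have h2 : 0 ≤ fnorm (C - G * Gᵀ) := Real.sqrt_nonneg _
    have h3 : (lam / Real.sqrt 2)^2 = lam^2 / 2 := by
      rw [div_pow, Real.sq_sqrt (by norm_num : (0:ℝ) ≤ 2)]
    calc finner (C - G * Gᵀ) (C - G * Gᵀ) = fnorm (C - G * Gᵀ) ^ 2 := h1.symm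
      _ < (lam / Real.sqrt 2)^2 := by
          apply pow_lt_pow_left₀ hclose h2
          norm_num
      _ = lam^2 / 2 := h3
  -- the contradiction
  have hαβ : β ≤ α := le_trans hβle (le_trans hAB hαge)
  have hY : μ2 - μ1 ≤ (α - μ1) - (β - μ2) := by linarith
  have e1 : (μ2 - μ1)^2 ≤ ((α - μ1) - (β - μ2))^2 :=
    pow_le_pow_left₀ (by linarith) hY 2
  have e2 : ((α - μ1) - (β - μ2))^2 ≤ 2*((α - μ1)^2 + (β - μ2)^2) := by
    nlinarith [sq_nonneg ((α - μ1) + (β - μ2))]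
  have e3 : lam^2 ≤ (μ1 + μ2)^2 := pow_le_pow_left₀ hlamnn hlamle 2
  have e4 : (μ1 + μ2)^2 = (μ2 - μ1)^2 + 4*(μ2*μ1) := by ring
  have e3' : lam^2 ≤ (μ2 - μ1)^2 + 4*(μ2*μ1) := e3.trans_eq e4
  have e5 : μ2*μ1 ≤ μ2*t := mul_le_mul_of_nonneg_left htge hμ2pos.le
  linarith [hI1, hI2, hI3, hI4, hfin, e1, e2, e3', e5, hsplit.le, hsplit.ge]
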